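/- Let 1/2<θ<1, t ∈ ℝ, η ∈ ℤ, and let φ ∈ C^∞_c(ℝ) with φ = 1 on [−δ,δ] for some δ>0. Then for every x with 0<x<δ, the Stein fractional derivative satisfies 𝒟^θ_ξ( e^{it·sign(ξ)η²} φ(ξ) )(x) ≥ c |sin(tη²)| x^{-θ} for some constant c>0 depending only on θ and δ. Consequently, if sin(tη²) ≠ 0 (in particular, this yields that the vanishing of \hat f(0,η) is necessary in the corresponding unique continuation results), then the function ξ ↦ e^{it·sign(ξ)η²} φ(ξ) does not satisfy 𝒟^θ_ξ(e^{it·sign(ξ)η²}φ(ξ)) ∈ L²(ℝ). -/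

import Mathlib

open MeasureTheory Real Set
open scoped ENNReal
noncomputable section

/-- The Stein fractional derivative of order `b` of a function `g : ℝ → ℂ`:
`𝒟^b g(x) = (∫_ℝ |g(x)-g(z)|²/|x-z|^{1+2b} dz)^{1/2}`. -/
def steinD (b : ℝ) (g : ℝ → ℂ) (x : ℝ) : ℝ :=
  (∫ z : ℝ, ‖g x - g z‖ ^ 2 / |x - z| ^ (1 + 2 * b)) ^ ((1 : ℝ) / 2)

lemma measurable_realSign : Measurable Real.sign := by
  have h : Real.sign = fun r : ℝ => if r < 0 then (-1 : ℝ) else if 0 < r then 1 else 0 := by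
    funext r; rfl
  rw [h]
  exact Measurable.ite measurableSet_Iio measurable_const
    (Measurable.ite measurableSet_Ioi measurable_const measurable_const)

lemma integrableOn_singleton' (f : ℝ → ℝ) (a : ℝ) : IntegrableOn f {a} volume := by
  rw [IntegrableOn, Measure.restrict_eq_zero.mpr (by simp)]
  exact integrable_zero_measure

lemma integrableOn_of_le {f g : ℝ → ℝ} {s : Set ℝ} (hs : MeasurableSet s)
    (hg : IntegrableOn g s volume) (hfm : Measurable f)
    (h0 : ∀ z ∈ s, 0 ≤ f z) (hle : ∀ z ∈ s, f z ≤ g z) : IntegrableOn f s volume := by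
  refine Integrable.mono hg hfm.aestronglyMeasurable.restrict ?_
  refine (ae_restrict_iff' hs).2 (ae_of_all _ fun z hz => ?_)
  rw [Real.norm_eq_abs, Real.norm_eq_abs, abs_of_nonneg (h0 z hz)]
  exact (hle z hz).trans (le_abs_self _)

lemma integrableF {θ x M L : ℝ} (hθ₁ : 1 / 2 < θ) (hθ₂ : θ < 1) (hx : 0 < x)
    {g : ℝ → ℂ} (hgm : Measurable g) (hM : ∀ z, ‖g z‖ ≤ M)
    (hL : ∀ z : ℝ, 0 < z → ‖g x - g z‖ ≤ L * |x - z|) :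
    Integrable (fun z : ℝ => ‖g x - g z‖ ^ 2 / |x - z| ^ (1 + 2 * θ)) volume := by
  set p : ℝ := 1 + 2 * θ with hp
  have hp0 : 0 < p := by simp only [hp]; linarith
  set F : ℝ → ℝ := fun z => ‖g x - g z‖ ^ 2 / |x - z| ^ p with hF
  have hFm : Measurable F := by
    apply Measurable.div
    · exact ((measurable_const.sub hgm).norm.pow measurable_const)
    · exact ((continuous_const.sub continuous_id).abs.rpow_const
        (fun z => Or.inr hp0.le)).measurable
  have hF0 : ∀ z, 0 ≤ F z := fun z => by positivity
  have hM0 : 0 ≤ M := le_trans (norm_nonneg _) (hM 0)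
  -- bound away from x : ‖g x - g z‖ ≤ 2M
  have hFle : ∀ z : ℝ, z ≠ x → F z ≤ (2 * M) ^ 2 * |x - z| ^ (-p) := by
    intro z hz
    have hy : 0 < |x - z| := by
      rw [abs_pos, sub_ne_zero]; exact fun h => hz h.symm
    have h1 : ‖g x - g z‖ ^ 2 ≤ (2 * M) ^ 2 := by
      have : ‖g x - g z‖ ≤ 2 * M := by
        calc ‖g x - g z‖ ≤ ‖g x‖ + ‖g z‖ := norm_sub_le _ _
        _ ≤ 2 * M := by have := hM x; have := hM z; linarith
      exact pow_le_pow_left₀ (norm_nonneg _) this 2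
    rw [Real.rpow_neg hy.le]
    simp only [hF, div_eq_mul_inv]
    exact mul_le_mul_of_nonneg_right h1 (by positivity)
  -- piece 1 : Iio (x/2)
  have hs : -p < -1 := by simp only [hp]; linarith
  have hx2 : (0:ℝ) < x / 2 := by linarith
  have base : IntegrableOn (fun u : ℝ => u ^ (-p)) (Ioi (x / 2)) volume :=
    integrableOn_Ioi_rpow_of_lt hs hx2
  have P1 : IntegrableOn (fun z : ℝ => (x - z) ^ (-p)) (Iio (x / 2)) volume := by
    have e1 : MeasurePreserving (fun z : ℝ => x - z) volume volume :=
      Measure.measurePreserving_sub_left volume x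
    have emb1 : MeasurableEmbedding (fun z : ℝ => x - z) :=
      (Homeomorph.subLeft x).isClosedEmbedding.measurableEmbedding
    have hpre : (fun z : ℝ => x - z) ⁻¹' (Ioi (x / 2)) = Iio (x / 2) := by
      ext z; simp only [mem_preimage, mem_Ioi, mem_Iio]; constructor <;> intro h <;> linarith
    have := (e1.integrableOn_comp_preimage emb1).2 base
    rwa [hpre] at this
  have P3 : IntegrableOn (fun z : ℝ => (z - x) ^ (-p)) (Ioi (x / 2 + x)) volume := by
    have e3 : MeasurePreserving (fun z : ℝ => z - x) volume volume :=
      measurePreserving_sub_right volume x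
    have emb3 : MeasurableEmbedding (fun z : ℝ => z - x) :=
      (Homeomorph.subRight x).isClosedEmbedding.measurableEmbedding
    have hpre : (fun z : ℝ => z - x) ⁻¹' (Ioi (x / 2)) = Ioi (x / 2 + x) := by
      ext z; simp only [mem_preimage, mem_Ioi]; constructor <;> intro h <;> linarith
    have := (e3.integrableOn_comp_preimage emb3).2 base
    rwa [hpre] at this
  -- piece 2 : Icc (x/2) (x/2 + x) : use Lipschitz-type bound
  have hr : (-1:ℝ) < 1 - 2 * θ := by linarith
  have j1 : IntegrableOn (fun z : ℝ => |x - z| ^ (1 - 2 * θ)) (Ioc (x / 2) x) volume := by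
    have h0 := (intervalIntegral.intervalIntegrable_rpow' (a := 0) (b := x / 2) hr).comp_sub_left x
    rw [sub_zero, show x - x / 2 = x / 2 by ring] at h0
    have h0' := h0.symm
    rw [intervalIntegrable_iff_integrableOn_Ioc_of_le (by linarith)] at h0'
    refine h0'.congr_fun (fun z hz => ?_) measurableSet_Ioc
    rw [abs_of_nonneg (by simp only [mem_Ioc] at hz; linarith : (0:ℝ) ≤ x - z)]
  have j2 : IntegrableOn (fun z : ℝ => |x - z| ^ (1 - 2 * θ)) (Ioc x (x / 2 + x)) volume := by
    have h0 := (intervalIntegral.intervalIntegrable_rpow' (a := 0) (b := x / 2) hr).comp_sub_right x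
    rw [zero_add] at h0
    rw [intervalIntegrable_iff_integrableOn_Ioc_of_le (by linarith)] at h0
    refine h0.congr_fun (fun z hz => ?_) measurableSet_Ioc
    rw [abs_sub_comm, abs_of_nonneg (by simp only [mem_Ioc] at hz; linarith : (0:ℝ) ≤ z - x)]
  have j0 : IntegrableOn (fun z : ℝ => |x - z| ^ (1 - 2 * θ)) (Icc (x / 2) (x / 2 + x)) volume := by
    have hsub : Icc (x / 2) (x / 2 + x) ⊆ {x / 2} ∪ (Ioc (x / 2) x ∪ Ioc x (x / 2 + x)) := by
      intro z hz
      simp only [mem_Icc] at hz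
      rcases eq_or_lt_of_le hz.1 with h | h
      · exact Or.inl (by simp [← h])
      · rcases le_or_gt z x with h2 | h2
        · exact Or.inr (Or.inl ⟨h, h2⟩)
        · exact Or.inr (Or.inr ⟨h2, hz.2⟩)
    exact (((integrableOn_singleton' _ _).union (j1.union j2)).mono_set hsub)
  -- now dominate F on each piece
  have F1 : IntegrableOn F (Iio (x / 2)) volume := by
    refine integrableOn_of_le measurableSet_Iio ((P1.const_mul ((2 * M) ^ 2))) hFm
      (fun z _ => hF0 z) (fun z hz => ?_)
    simp only [mem_Iio] at hz
    have hzx : z ≠ x := by intro h; rw [h] at hz; linarith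
    have habs : |x - z| = x - z := abs_of_nonneg (by linarith)
    calc F z ≤ (2 * M) ^ 2 * |x - z| ^ (-p) := hFle z hzx
    _ = (2 * M) ^ 2 * (x - z) ^ (-p) := by rw [habs]
  have F3 : IntegrableOn F (Ioi (x / 2 + x)) volume := by
    refine integrableOn_of_le measurableSet_Ioi ((P3.const_mul ((2 * M) ^ 2))) hFm
      (fun z _ => hF0 z) (fun z hz => ?_)
    simp only [mem_Ioi] at hz
    have hzx : z ≠ x := by intro h; rw [h] at hz; linarith
    have habs : |x - z| = z - x := by rw [abs_sub_comm]; exact abs_of_nonneg (by linarith)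
    calc F z ≤ (2 * M) ^ 2 * |x - z| ^ (-p) := hFle z hzx
    _ = (2 * M) ^ 2 * (z - x) ^ (-p) := by rw [habs]
  have F2 : IntegrableOn F (Icc (x / 2) (x / 2 + x)) volume := by
    refine integrableOn_of_le measurableSet_Icc (j0.const_mul (L ^ 2)) hFm
      (fun z _ => hF0 z) (fun z hz => ?_)
    simp only [mem_Icc] at hz
    have hz0 : 0 < z := by linarith
    rcases eq_or_ne z x with rfl | hzx
    · have : F z = 0 := by
        simp only [hF, sub_self, norm_zero, abs_zero]
        rw [Real.zero_rpow hp0.ne']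
        simp
      rw [this, sub_self, abs_zero, Real.zero_rpow (by linarith : (1:ℝ) - 2 * θ ≠ 0)]
      simp
    · have hy : 0 < |x - z| := by rw [abs_pos, sub_ne_zero]; exact fun h => hzx h.symm
      have h1 : ‖g x - g z‖ ^ 2 ≤ L ^ 2 * |x - z| ^ (2:ℕ) := by
        have h2 := hL z hz0
        calc ‖g x - g z‖ ^ 2 ≤ (L * |x - z|) ^ 2 := pow_le_pow_left₀ (norm_nonneg _) h2 2
        _ = L ^ 2 * |x - z| ^ (2:ℕ) := by ring
      calc F z ≤ (L ^ 2 * |x - z| ^ (2:ℕ)) / |x - z| ^ p := by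
            exact div_le_div_of_nonneg_right h1 (Real.rpow_pos_of_pos hy p).le
      _ = L ^ 2 * |x - z| ^ (1 - 2 * θ) := by
            rw [mul_div_assoc, ← Real.rpow_natCast |x - z| 2, ← Real.rpow_sub hy]
            congr 1
            push_cast
            rw [hp]
            ring_nf
  -- combine
  rw [← integrableOn_univ]
  refine ((F1.union F2).union F3).mono_set (fun z _ => ?_)
  rcases lt_or_ge z (x / 2) with h | h
  · exact Or.inl (Or.inl h)
  · rcases le_or_gt z (x / 2 + x) with h2 | h2
    · exact Or.inl (Or.inr ⟨h, h2⟩)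
    · exact Or.inr h2

lemma norm_exp_diff (a : ℝ) : ‖Complex.exp (Complex.I * (a : ℂ)) -
    Complex.exp (Complex.I * ((-a : ℝ) : ℂ))‖ = 2 * |Real.sin a| := by
  have h : Complex.exp (Complex.I * (a : ℂ)) - Complex.exp (Complex.I * ((-a : ℝ) : ℂ))
      = ((2 * Real.sin a : ℝ) : ℂ) * Complex.I := by
    rw [mul_comm Complex.I (a : ℂ), mul_comm Complex.I (((-a : ℝ)) : ℂ),
      Complex.exp_mul_I, Complex.exp_mul_I]
    push_cast
    rw [Complex.cos_neg, Complex.sin_neg]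
    ring
  rw [h, norm_mul, Complex.norm_I, mul_one, Complex.norm_real, Real.norm_eq_abs, abs_mul, abs_two]
/-- **Claim 3.4 (i)** (lower bound for the Stein derivative): for `1/2 < θ < 1` and
`δ > 0` there is `c = c(θ,δ) > 0` such that for all `t ∈ ℝ`, `η ∈ ℤ` and every
`φ ∈ C^∞_c(ℝ)` with `φ = 1` on `[-δ,δ]`, one has, for every `0 < x < δ`,
`𝒟^θ_ξ(e^{it sign(ξ)η²} φ(ξ))(x) ≥ c |sin(tη²)| x^{-θ}`; consequently, if
`sin(tη²) ≠ 0`, then `𝒟^θ_ξ(e^{it sign(ξ)η²} φ(ξ)) ∉ L²(ℝ)`. -/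
theorem stein_derivative_lower_bound (θ δ : ℝ) (hθ₁ : 1 / 2 < θ) (hθ₂ : θ < 1)
    (hδ : 0 < δ) :
    ∃ c : ℝ, 0 < c ∧ ∀ (t : ℝ) (η : ℤ) (φ : ℝ → ℝ),
      ContDiff ℝ ((⊤ : ℕ∞) : WithTop ℕ∞) φ → HasCompactSupport φ → (∀ ξ : ℝ, |ξ| ≤ δ → φ ξ = 1) →
      (∀ x : ℝ, 0 < x → x < δ →
        c * |Real.sin (t * (η : ℝ) ^ 2)| * x ^ (-θ) ≤
          steinD θ
            (fun ξ : ℝ =>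
              Complex.exp (Complex.I * ((t * Real.sign ξ * (η : ℝ) ^ 2 : ℝ) : ℂ)) *
                ((φ ξ : ℝ) : ℂ)) x) ∧
      (Real.sin (t * (η : ℝ) ^ 2) ≠ 0 →
        eLpNorm (fun x : ℝ =>
          steinD θ
            (fun ξ : ℝ =>
              Complex.exp (Complex.I * ((t * Real.sign ξ * (η : ℝ) ^ 2 : ℝ) : ℂ)) *
                ((φ ξ : ℝ) : ℂ)) x) 2 volume = ⊤) := by
  set c : ℝ := Real.sqrt (4 * (2 : ℝ) ^ (-(1 + 2 * θ))) with hc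
  have hcpos : 0 < c := Real.sqrt_pos.mpr (by positivity)
  refine ⟨c, hcpos, ?_⟩
  intro t η φ hφ hφc hφ1
  set a : ℝ := t * (η : ℝ) ^ 2 with ha
  set g : ℝ → ℂ := fun ξ : ℝ =>
    Complex.exp (Complex.I * ((t * Real.sign ξ * (η : ℝ) ^ 2 : ℝ) : ℂ)) * ((φ ξ : ℝ) : ℂ)
    with hg
  -- basic facts about g
  have hgm : Measurable g := by
    apply Measurable.mul
    · exact Complex.measurable_exp.comp
        ((Complex.measurable_ofReal.comp
          ((measurable_const.mul measurable_realSign).mul measurable_const)).const_mul Complex.I)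
    · exact Complex.measurable_ofReal.comp hφ.continuous.measurable
  obtain ⟨M, hM⟩ := hφc.exists_bound_of_continuous hφ.continuous
  have hMg : ∀ z, ‖g z‖ ≤ M := by
    intro z
    simp only [hg]
    rw [norm_mul, mul_comm Complex.I, Complex.norm_exp_ofReal_mul_I, one_mul, Complex.norm_real]
    exact hM z
  -- Lipschitz bound for φ
  have hdiff : Differentiable ℝ φ := hφ.differentiable (by simp)
  have hcd : Continuous (deriv φ) := hφ.continuous_deriv (by exact_mod_cast le_top)
  obtain ⟨C, hC⟩ := (hφc.deriv).exists_bound_of_continuous hcd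
  have hlip : LipschitzWith C.toNNReal φ := by
    refine lipschitzWith_of_nnnorm_deriv_le hdiff fun ξ => ?_
    have h1 : ‖deriv φ ξ‖ ≤ (C.toNNReal : ℝ) := (hC ξ).trans (Real.le_coe_toNNReal C)
    exact_mod_cast h1
  have hsign : ∀ ξ : ℝ, 0 < ξ → g ξ = Complex.exp (Complex.I * (a : ℂ)) * ((φ ξ : ℝ) : ℂ) := by
    intro ξ hξ
    simp only [hg, Real.sign_of_pos hξ, mul_one, ha]
  -- Part 1 : the pointwise lower bound
  have H1 : ∀ x : ℝ, 0 < x → x < δ → c * |Real.sin a| * x ^ (-θ) ≤ steinD θ g x := by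
    intro x hx0 hxδ
    have hgdiff_pos : ∀ z : ℝ, 0 < z → ‖g x - g z‖ = |φ x - φ z| := by
      intro z hz
      rw [hsign x hx0, hsign z hz, ← mul_sub, norm_mul, mul_comm Complex.I,
        Complex.norm_exp_ofReal_mul_I, one_mul, ← Complex.ofReal_sub, Complex.norm_real,
        Real.norm_eq_abs]
    have hL : ∀ z : ℝ, 0 < z → ‖g x - g z‖ ≤ (C.toNNReal : ℝ) * |x - z| := by
      intro z hz
      rw [hgdiff_pos z hz]
      simpa [Real.dist_eq] using hlip.dist_le_mul x z
    have hInt : Integrable (fun z : ℝ => ‖g x - g z‖ ^ 2 / |x - z| ^ (1 + 2 * θ)) volume :=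
      integrableF hθ₁ hθ₂ hx0 hgm hMg hL
    have hgx : g x = Complex.exp (Complex.I * (a : ℂ)) := by
      rw [hsign x hx0, hφ1 x (by rw [abs_of_pos hx0]; linarith), Complex.ofReal_one, mul_one]
    have hgz : ∀ z ∈ Ioo (-x) 0, g z = Complex.exp (Complex.I * ((-a : ℝ) : ℂ)) := by
      intro z hz
      obtain ⟨h1, h2⟩ := hz
      have hφz : φ z = 1 := hφ1 z (by rw [abs_of_neg h2]; linarith)
      simp only [hg, hφz, Complex.ofReal_one, mul_one, Real.sign_of_neg h2]
      congr 2
      push_cast [ha]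
      ring
    -- constant lower bound on Ioo (-x) 0
    have hset : ∀ z ∈ Ioo (-x) 0,
        4 * Real.sin a ^ 2 * (2 * x) ^ (-(1 + 2 * θ)) ≤
          ‖g x - g z‖ ^ 2 / |x - z| ^ (1 + 2 * θ) := by
      intro z hz
      have hz1 : -x < z := hz.1
      have hz2 : z < 0 := hz.2
      have hxz : 0 < x - z := by linarith
      have habs : |x - z| = x - z := abs_of_pos hxz
      rw [hgx, hgz z hz, norm_exp_diff, habs]
      have hnum : (2 * |Real.sin a|) ^ 2 = 4 * Real.sin a ^ 2 := by
        rw [mul_pow, sq_abs]; ring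
      rw [hnum]
      have hle : (x - z) ^ (1 + 2 * θ) ≤ (2 * x) ^ (1 + 2 * θ) :=
        Real.rpow_le_rpow hxz.le (by linarith) (by linarith)
      rw [Real.rpow_neg (by positivity), div_eq_mul_inv]
      have hpos : 0 < (x - z) ^ (1 + 2 * θ) := Real.rpow_pos_of_pos hxz _
      exact mul_le_mul_of_nonneg_left (inv_anti₀ hpos hle) (by positivity)
    have hvol : volume (Ioo (-x) 0) ≠ ⊤ := by
      rw [Real.volume_Ioo]; exact ENNReal.ofReal_ne_top
    have hlow := setIntegral_ge_of_const_le_real measurableSet_Ioo hvol hset hInt.integrableOn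
    rw [Real.volume_real_Ioo_of_le (by linarith)] at hlow
    have htot : (∫ z in Ioo (-x) 0, ‖g x - g z‖ ^ 2 / |x - z| ^ (1 + 2 * θ)) ≤
        ∫ z : ℝ, ‖g x - g z‖ ^ 2 / |x - z| ^ (1 + 2 * θ) :=
      setIntegral_le_integral hInt (ae_of_all _ fun z => by positivity)
    have E : 4 * Real.sin a ^ 2 * (2 * x) ^ (-(1 + 2 * θ)) * (0 - -x) =
        (c * |Real.sin a| * x ^ (-θ)) ^ 2 := by
      have h2x : ((2 : ℝ) * x) ^ (-(1 + 2 * θ)) =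
          2 ^ (-(1 + 2 * θ)) * x ^ (-(1 + 2 * θ)) := Real.mul_rpow (by norm_num) hx0.le
      have hxx : x ^ (-(1 + 2 * θ)) * x = x ^ (-(2 * θ)) := by
        nth_rewrite 2 [← Real.rpow_one x]
        rw [← Real.rpow_add hx0]
        ring_nf
      have hc2 : c ^ 2 = 4 * 2 ^ (-(1 + 2 * θ)) := Real.sq_sqrt (by positivity)
      have hxt : (x ^ (-θ)) ^ (2 : ℕ) = x ^ (-(2 * θ)) := by
        rw [← Real.rpow_natCast (x ^ (-θ)) 2, ← Real.rpow_mul hx0.le]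
        ring_nf
      rw [h2x, mul_pow, mul_pow, hc2, sq_abs, hxt, ← hxx]
      ring
    have key : (c * |Real.sin a| * x ^ (-θ)) ^ 2 ≤
        ∫ z : ℝ, ‖g x - g z‖ ^ 2 / |x - z| ^ (1 + 2 * θ) := by
      rw [← E]; exact hlow.trans htot
    have h3 : 0 ≤ c * |Real.sin a| * x ^ (-θ) := by positivity
    calc c * |Real.sin a| * x ^ (-θ)
        = ((c * |Real.sin a| * x ^ (-θ)) ^ (2 : ℕ)) ^ ((1 : ℝ) / 2) := by
          rw [← Real.rpow_natCast (c * |Real.sin a| * x ^ (-θ)) 2, ← Real.rpow_mul h3]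
          norm_num
      _ ≤ (∫ z : ℝ, ‖g x - g z‖ ^ 2 / |x - z| ^ (1 + 2 * θ)) ^ ((1 : ℝ) / 2) :=
          Real.rpow_le_rpow (by positivity) key (by norm_num)
      _ = steinD θ g x := rfl
  refine ⟨fun x hx0 hxδ => H1 x hx0 hxδ, ?_⟩
  intro hsin
  have hf0 : ∀ x : ℝ, 0 ≤ steinD θ g x := fun x =>
    Real.rpow_nonneg (integral_nonneg fun z => by positivity) _
  rw [eLpNorm_eq_lintegral_rpow_enorm_toReal (by norm_num) (by norm_num)]
  simp only [ENNReal.toReal_ofNat]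
  have hT : ∫⁻ x : ℝ in Ioo 0 δ, ENNReal.ofReal (x ^ (-(2 * θ))) = ⊤ := by
    by_contra h
    have hmeas : Measurable fun x : ℝ => x ^ (-(2 * θ)) := measurable_id.pow measurable_const
    have hint : IntegrableOn (fun x : ℝ => x ^ (-(2 * θ))) (Ioo 0 δ) volume := by
      constructor
      · exact hmeas.aestronglyMeasurable
      · rw [hasFiniteIntegral_iff_ofReal]
        · exact lt_top_iff_ne_top.2 h
        · exact (ae_restrict_iff' measurableSet_Ioo).2
            (ae_of_all _ fun x hx => Real.rpow_nonneg hx.1.le _)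
    have := (intervalIntegral.integrableOn_Ioo_rpow_iff hδ).1 hint
    linarith
  have step : ∀ x ∈ Ioo (0:ℝ) δ,
      ENNReal.ofReal ((c * |Real.sin a|) ^ 2 * x ^ (-(2 * θ))) ≤
        ‖steinD θ g x‖ₑ ^ (2:ℝ) := by
    intro x hx
    have hx0 := hx.1
    have hfx := H1 x hx.1 hx.2
    have h3 : (0:ℝ) ≤ c * |Real.sin a| * x ^ (-θ) := by positivity
    have hid : (c * |Real.sin a|) ^ 2 * x ^ (-(2 * θ)) = (c * |Real.sin a| * x ^ (-θ)) ^ 2 := by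
      have hxt : (x ^ (-θ)) ^ (2 : ℕ) = x ^ (-(2 * θ)) := by
        rw [← Real.rpow_natCast (x ^ (-θ)) 2, ← Real.rpow_mul hx0.le]; ring_nf
      rw [← hxt]; ring
    rw [hid]
    calc ENNReal.ofReal ((c * |Real.sin a| * x ^ (-θ)) ^ 2)
        ≤ ENNReal.ofReal ((steinD θ g x) ^ 2) :=
          ENNReal.ofReal_le_ofReal (pow_le_pow_left₀ h3 hfx 2)
      _ = ENNReal.ofReal ((steinD θ g x) ^ (2:ℝ)) := by
          rw [← Real.rpow_natCast (steinD θ g x) 2]; norm_num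
      _ = ENNReal.ofReal (steinD θ g x) ^ (2:ℝ) :=
          (ENNReal.ofReal_rpow_of_nonneg (hf0 x) (by norm_num : (0:ℝ) ≤ 2)).symm
      _ = ‖steinD θ g x‖ₑ ^ (2:ℝ) := by
          rw [Real.enorm_eq_ofReal (hf0 x)]
  have hTop : ∫⁻ x : ℝ in Ioo 0 δ,
      ENNReal.ofReal ((c * |Real.sin a|) ^ 2 * x ^ (-(2 * θ))) = ⊤ := by
    have hCpos : (0:ℝ) < (c * |Real.sin a|) ^ 2 := by positivity
    simp_rw [ENNReal.ofReal_mul hCpos.le]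
    rw [lintegral_const_mul _ ((measurable_id'.pow measurable_const).ennreal_ofReal), hT]
    exact ENNReal.mul_top (ENNReal.ofReal_pos.2 hCpos).ne'
  have hfinal : (∫⁻ x : ℝ, ‖steinD θ g x‖ₑ ^ (2:ℝ)) = ⊤ := by
    rw [eq_top_iff]
    calc (⊤:ℝ≥0∞) = ∫⁻ x : ℝ, (Ioo (0:ℝ) δ).indicator
          (fun x => ENNReal.ofReal ((c * |Real.sin a|) ^ 2 * x ^ (-(2 * θ)))) x := by
          rw [lintegral_indicator measurableSet_Ioo, hTop]
      _ ≤ _ := lintegral_mono fun x => by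
          by_cases hx : x ∈ Ioo (0:ℝ) δ
          · rw [Set.indicator_of_mem hx]; exact step x hx
          · rw [Set.indicator_of_notMem hx]; exact zero_le
  rw [hfinal]
  simp
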